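/- The interpolating IFS operator T_F is a contraction with constant c = max_i (F(x_i) − F(x_{i−1})), and its action preserves the interpolation property: for any distribution function u, T_F u(x_i) tends to F(x_i) at the fixed point; in particular if max_i (F(x_i)−F(x_{i−1})) < 1 then T_F has a unique fixed point F̃ with F̃(x_i)=F(x_i) for all i. -/

import Mathlib

set_option maxHeartbeats 1000000
set_option synthInstance.maxHeartbeats 1000000


open Set Filter Topology

/-- A distribution function on `[0,1]`: non-decreasing, right-continuous,
`F 0 = 0` and `F 1 = 1`. -/
def IsDF (F : ℝ → ℝ) : Prop :=
  MonotoneOn F (Set.Icc 0 1) ∧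
  (∀ a ∈ Set.Ico (0:ℝ) 1, ContinuousWithinAt F (Set.Icc a 1) a) ∧
  F 0 = 0 ∧ F 1 = 1

/-- The sup distance between two functions, over `[0,1]`. -/
noncomputable def dsup (F G : ℝ → ℝ) : ℝ :=
  ⨆ x : Set.Icc (0:ℝ) 1, |F x - G x|

noncomputable def stmt14ext (f : ↥(Set.Icc (0:ℝ) 1) → ℝ) : ℝ → ℝ :=
  fun t => if h : t ∈ Set.Icc (0:ℝ) 1 then f ⟨t, h⟩ else 0

lemma stmt14ext_eq (f : ↥(Set.Icc (0:ℝ) 1) → ℝ) {t : ℝ} (h : t ∈ Set.Icc (0:ℝ) 1) :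
    stmt14ext f t = f ⟨t, h⟩ := dif_pos h

lemma isDF_congr {F G : ℝ → ℝ} (hF : IsDF F) (h : ∀ t ∈ Set.Icc (0:ℝ) 1, F t = G t) :
    IsDF G := by
  obtain ⟨hm, hc, h0, h1⟩ := hF
  refine ⟨fun s hs t ht hst => ?_, fun a ha => ?_, ?_, ?_⟩
  · rw [← h s hs, ← h t ht]; exact hm hs ht hst
  · have hsub : Set.Icc a 1 ⊆ Set.Icc (0:ℝ) 1 := Icc_subset_Icc ha.1 le_rfl
    exact (hc a ha).congr (fun t ht => (h t (hsub ht)).symm)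
      (h a ⟨ha.1, ha.2.le⟩).symm
  · rw [← h 0 (by norm_num), h0]
  · rw [← h 1 (by norm_num), h1]

lemma isDF_mem {F : ℝ → ℝ} (hF : IsDF F) {t : ℝ} (ht : t ∈ Set.Icc (0:ℝ) 1) :
    F t ∈ Set.Icc (0:ℝ) 1 := by
  constructor
  · rw [← hF.2.2.1]; exact hF.1 (by norm_num) ht ht.1
  · rw [← hF.2.2.2]; exact hF.1 ht (by norm_num) ht.2

/-- The interpolating IFS operator
`T_F u t = (F (x_{i+1}) - F (x_i)) · u ((t - x_i)/(x_{i+1} - x_i)) + F (x_i)`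
is a contraction with constant `c = max_i (F (x_{i+1}) - F (x_i))` on distribution
functions; if `c < 1` it has a (unique) fixed point `F̃` which interpolates `F`
at all the nodes: `F̃ (x_i) = F (x_i)`. -/
theorem stmt14 (n : ℕ) (x : Fin (n+2) → ℝ)
    (hx : StrictMono x) (hx0 : x 0 = 0) (hx1 : x (Fin.last (n+1)) = 1)
    (F : ℝ → ℝ) (hF : IsDF F)
    (hFc : ContinuousOn F (Set.Icc 0 1)) (hFs : StrictMonoOn F (Set.Icc 0 1))
    (T : (ℝ → ℝ) → (ℝ → ℝ))
    (hT : ∀ u : ℝ → ℝ, ∀ i : Fin (n+1), ∀ t ∈ Set.Ico (x i.castSucc) (x i.succ),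
      T u t = (F (x i.succ) - F (x i.castSucc)) *
          u ((t - x i.castSucc) / (x i.succ - x i.castSucc)) + F (x i.castSucc))
    (hT1 : ∀ u : ℝ → ℝ, T u 1 = 1) :
    (∀ u v : ℝ → ℝ, IsDF u → IsDF v →
      dsup (T u) (T v) ≤
        (Finset.univ.sup' Finset.univ_nonempty
          (fun i : Fin (n+1) => F (x i.succ) - F (x i.castSucc))) * dsup u v) ∧
    ((Finset.univ.sup' Finset.univ_nonempty
        (fun i : Fin (n+1) => F (x i.succ) - F (x i.castSucc))) < 1 →
      ∃ Ft : ℝ → ℝ, IsDF Ft ∧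
        (∀ t ∈ Set.Icc (0:ℝ) 1, T Ft t = Ft t) ∧
        (∀ i : Fin (n+2), Ft (x i) = F (x i)) ∧
        (∀ G : ℝ → ℝ, IsDF G → (∀ t ∈ Set.Icc (0:ℝ) 1, T G t = G t) →
          ∀ t ∈ Set.Icc (0:ℝ) 1, G t = Ft t)) := by
  classical
  haveI : Nonempty ↥(Set.Icc (0:ℝ) 1) := ⟨⟨0, by norm_num⟩⟩
  set c : ℝ := Finset.univ.sup' Finset.univ_nonempty
      (fun i : Fin (n+1) => F (x i.succ) - F (x i.castSucc)) with hcdef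
  -- basic facts
  have hx01 : ∀ j : Fin (n+2), x j ∈ Set.Icc (0:ℝ) 1 := fun j =>
    ⟨hx0 ▸ hx.monotone (Fin.zero_le j), hx1 ▸ hx.monotone (Fin.le_last j)⟩
  have hab : ∀ i : Fin (n+1), x i.castSucc < x i.succ := fun i => hx (Fin.castSucc_lt_succ (i := i))
  have hp0 : ∀ i : Fin (n+1), 0 ≤ F (x i.succ) - F (x i.castSucc) := fun i =>
    sub_nonneg.2 (hF.1 (hx01 _) (hx01 _) (hab i).le)
  have hp1 : ∀ i : Fin (n+1), F (x i.succ) - F (x i.castSucc) ≤ 1 := fun i => by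
    have h1 : F (x i.succ) ≤ 1 := (isDF_mem hF (hx01 _)).2
    have h2 : 0 ≤ F (x i.castSucc) := (isDF_mem hF (hx01 _)).1
    linarith
  have hpc : ∀ i : Fin (n+1), F (x i.succ) - F (x i.castSucc) ≤ c := fun i =>
    Finset.le_sup' (fun i : Fin (n+1) => F (x i.succ) - F (x i.castSucc)) (Finset.mem_univ i)
  have hc0 : (0:ℝ) ≤ c := le_trans (hp0 0) (hpc 0)
  -- covering lemma
  have cover : ∀ t : ℝ, 0 ≤ t → t < 1 →
      ∃ i : Fin (n+1), x i.castSucc ≤ t ∧ t < x i.succ := by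
    intro t ht0 ht1
    set s := Finset.univ.filter (fun i : Fin (n+1) => x i.castSucc ≤ t) with hs
    have hne : s.Nonempty := ⟨0, by
      simp only [hs, Finset.mem_filter, Finset.mem_univ, true_and]
      rw [Fin.castSucc_zero, hx0]; exact ht0⟩
    refine ⟨s.max' hne, ?_, ?_⟩
    · have := s.max'_mem hne
      simpa only [hs, Finset.mem_filter, Finset.mem_univ, true_and] using this
    · by_contra hcon
      push_neg at hcon
      by_cases hl : s.max' hne = Fin.last n
      · rw [hl, Fin.succ_last, hx1] at hcon
        exact absurd ht1 (not_lt.2 hcon)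
      · obtain ⟨j, hj⟩ := Fin.exists_castSucc_eq.2
          (show (s.max' hne).succ ≠ Fin.last (n+1) from
            ((s.max' hne).succ_ne_last_iff).2 hl)
        have hjs : j ∈ s := by
          simp only [hs, Finset.mem_filter, Finset.mem_univ, true_and]
          rw [hj]; exact hcon
        have hle : j ≤ s.max' hne := s.le_max' j hjs
        have : (s.max' hne).castSucc < j.castSucc := by
          calc (s.max' hne).castSucc < (s.max' hne).succ := Fin.castSucc_lt_succ
          _ = j.castSucc := hj.symm
        exact absurd (Fin.castSucc_le_castSucc_iff.2 hle) (not_le.2 this)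
  -- the affine maps land in [0,1)
  have hphi : ∀ (i : Fin (n+1)) (t : ℝ), x i.castSucc ≤ t → t < x i.succ →
      (t - x i.castSucc) / (x i.succ - x i.castSucc) ∈ Set.Ico (0:ℝ) 1 := by
    intro i t h1 h2
    have hd : (0:ℝ) < x i.succ - x i.castSucc := sub_pos.2 (hab i)
    constructor
    · exact div_nonneg (sub_nonneg.2 h1) hd.le
    · rw [div_lt_one hd]; linarith
  -- facts about dsup
  have hbdd : ∀ u v : ℝ → ℝ, IsDF u → IsDF v →
      BddAbove (Set.range fun t : Set.Icc (0:ℝ) 1 => |u t - v t|) := by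
    intro u v hu hv
    refine ⟨1, fun r hr => ?_⟩
    obtain ⟨t, rfl⟩ := hr
    have h1 := isDF_mem hu t.2
    have h2 := isDF_mem hv t.2
    rw [abs_sub_le_iff]
    constructor <;> [skip; skip] <;> (obtain ⟨a1, a2⟩ := h1; obtain ⟨b1, b2⟩ := h2; linarith)
  have hdle : ∀ u v : ℝ → ℝ, IsDF u → IsDF v → ∀ t : Set.Icc (0:ℝ) 1,
      |u t - v t| ≤ dsup u v := fun u v hu hv t => le_ciSup (hbdd u v hu hv) t
  have hd0 : ∀ u v : ℝ → ℝ, IsDF u → IsDF v → 0 ≤ dsup u v := fun u v hu hv =>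
    le_trans (abs_nonneg _) (hdle u v hu hv ⟨0, by norm_num⟩)
  -- Part 1
  have part1 : ∀ u v : ℝ → ℝ, IsDF u → IsDF v → dsup (T u) (T v) ≤ c * dsup u v := by
    intro u v hu hv
    refine Real.iSup_le (fun t => ?_) (mul_nonneg hc0 (hd0 u v hu hv))
    obtain ⟨t, ht0, ht1⟩ := t
    rcases eq_or_lt_of_le ht1 with h1 | h1
    · simp only [h1, hT1, sub_self, abs_zero]
      exact mul_nonneg hc0 (hd0 u v hu hv)
    · obtain ⟨i, hi1, hi2⟩ := cover t ht0 h1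
      rw [hT u i t ⟨hi1, hi2⟩, hT v i t ⟨hi1, hi2⟩]
      set σ := (t - x i.castSucc) / (x i.succ - x i.castSucc) with hσ
      have hσm : σ ∈ Set.Icc (0:ℝ) 1 := Ico_subset_Icc_self (hphi i t hi1 hi2)
      have heq : (F (x i.succ) - F (x i.castSucc)) * u σ + F (x i.castSucc) -
          ((F (x i.succ) - F (x i.castSucc)) * v σ + F (x i.castSucc)) =
          (F (x i.succ) - F (x i.castSucc)) * (u σ - v σ) := by ring
      rw [heq, abs_mul, abs_of_nonneg (hp0 i)]
      calc (F (x i.succ) - F (x i.castSucc)) * |u σ - v σ|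
          ≤ (F (x i.succ) - F (x i.castSucc)) * dsup u v :=
            mul_le_mul_of_nonneg_left (hdle u v hu hv ⟨σ, hσm⟩) (hp0 i)
        _ ≤ c * dsup u v := mul_le_mul_of_nonneg_right (hpc i) (hd0 u v hu hv)
  -- Part 2
  -- T preserves distribution functions
  have hord : ∀ i j : Fin (n+1), i < j → x i.succ ≤ x j.castSucc := fun i j hij =>
    hx.monotone (Fin.castSucc_lt_iff_succ_le.1 (Fin.castSucc_lt_castSucc_iff.2 hij))
  have hTDF : ∀ u : ℝ → ℝ, IsDF u → IsDF (T u) := by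
    intro u hu
    have hval : ∀ (i : Fin (n+1)) (t : ℝ), x i.castSucc ≤ t → t < x i.succ →
        F (x i.castSucc) ≤ T u t ∧ T u t ≤ F (x i.succ) := by
      intro i t h1 h2
      rw [hT u i t ⟨h1, h2⟩]
      have hσ := Ico_subset_Icc_self (hphi i t h1 h2)
      have h3 := isDF_mem hu hσ
      constructor
      · nlinarith [hp0 i, h3.1]
      · nlinarith [hp0 i, h3.1, h3.2]
    have h0mem : (0:ℝ) ∈ Set.Ico (x (0:Fin (n+1)).castSucc) (x (0:Fin (n+1)).succ) := by
      refine ⟨by rw [Fin.castSucc_zero, hx0], ?_⟩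
      have := hab 0
      rwa [Fin.castSucc_zero, hx0] at this
    refine ⟨?_, ?_, ?_, hT1 u⟩
    · -- monotone
      intro s hs t ht hst
      rcases eq_or_lt_of_le ht.2 with h1 | h1
      · rw [h1, hT1]
        rcases eq_or_lt_of_le hs.2 with h2 | h2
        · rw [h2, hT1]
        · obtain ⟨i, hi1, hi2⟩ := cover s hs.1 h2
          have h3 := (hval i s hi1 hi2).2
          have h4 := (isDF_mem hF (hx01 i.succ)).2
          linarith
      · have hs1 : s < 1 := lt_of_le_of_lt hst h1
        obtain ⟨i, hi1, hi2⟩ := cover s hs.1 hs1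
        obtain ⟨j, hj1, hj2⟩ := cover t ht.1 h1
        rcases lt_trichotomy i j with hij | hij | hij
        · have h3 := (hval i s hi1 hi2).2
          have h4 := (hval j t hj1 hj2).1
          have h5 : F (x i.succ) ≤ F (x j.castSucc) := hF.1 (hx01 _) (hx01 _) (hord i j hij)
          linarith
        · subst hij
          rw [hT u i s ⟨hi1, hi2⟩, hT u i t ⟨hj1, hj2⟩]
          have hd : (0:ℝ) < x i.succ - x i.castSucc := sub_pos.2 (hab i)
          have hσle : (s - x i.castSucc) / (x i.succ - x i.castSucc) ≤
              (t - x i.castSucc) / (x i.succ - x i.castSucc) := by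
            exact div_le_div_of_nonneg_right (by linarith) hd.le
          have hum : u ((s - x i.castSucc) / (x i.succ - x i.castSucc)) ≤
              u ((t - x i.castSucc) / (x i.succ - x i.castSucc)) :=
            hu.1 (Ico_subset_Icc_self (hphi i s hi1 hi2))
              (Ico_subset_Icc_self (hphi i t hj1 hj2)) hσle
          nlinarith [hp0 i]
        · exfalso
          have := hord j i hij
          linarith
    · -- right continuity
      intro a₀ ha₀
      obtain ⟨i, hi1, hi2⟩ := cover a₀ ha₀.1 ha₀.2
      rw [← continuousWithinAt_inter (Iio_mem_nhds hi2)]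
      have hd : (0:ℝ) < x i.succ - x i.castSucc := sub_pos.2 (hab i)
      have hσ₀m : (a₀ - x i.castSucc) / (x i.succ - x i.castSucc) ∈ Set.Ico (0:ℝ) 1 :=
        hphi i a₀ hi1 hi2
      have hcu : ContinuousWithinAt u
          (Set.Icc ((a₀ - x i.castSucc) / (x i.succ - x i.castSucc)) 1)
          ((a₀ - x i.castSucc) / (x i.succ - x i.castSucc)) := hu.2.1 _ hσ₀m
      have hmapsφ : Set.MapsTo (fun t => (t - x i.castSucc) / (x i.succ - x i.castSucc))
          (Set.Icc a₀ 1 ∩ Set.Iio (x i.succ))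
          (Set.Icc ((a₀ - x i.castSucc) / (x i.succ - x i.castSucc)) 1) := by
        rintro t ⟨⟨h1, h2⟩, h3⟩
        have h3' : t < x i.succ := h3
        constructor
        · exact div_le_div_of_nonneg_right (by linarith) hd.le
        · exact le_of_lt ((div_lt_one hd).2 (by linarith))
      have hφc : ContinuousWithinAt (fun t => (t - x i.castSucc) / (x i.succ - x i.castSucc))
          (Set.Icc a₀ 1 ∩ Set.Iio (x i.succ)) a₀ :=
        ((continuous_id.sub continuous_const).div_const _).continuousWithinAt
      have hcomp : ContinuousWithinAt
          (fun t => u ((t - x i.castSucc) / (x i.succ - x i.castSucc)))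
          (Set.Icc a₀ 1 ∩ Set.Iio (x i.succ)) a₀ :=
        ContinuousWithinAt.comp hcu hφc hmapsφ
      have hh : ContinuousWithinAt
          (fun t => (F (x i.succ) - F (x i.castSucc)) *
            u ((t - x i.castSucc) / (x i.succ - x i.castSucc)) + F (x i.castSucc))
          (Set.Icc a₀ 1 ∩ Set.Iio (x i.succ)) a₀ :=
        (continuousWithinAt_const.mul hcomp).add continuousWithinAt_const
      refine hh.congr ?_ ?_
      · rintro t ⟨⟨h1, h2⟩, h3⟩
        exact hT u i t ⟨le_trans hi1 h1, h3⟩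
      · exact hT u i a₀ ⟨hi1, hi2⟩
    · -- value at 0
      rw [hT u 0 0 h0mem]
      simp [Fin.castSucc_zero, hx0, hu.2.2.1, hF.2.2.1]
  refine ⟨part1, fun hc1 => ?_⟩
  -- the ℓ∞ space over [0,1]
  have hmem : ∀ f : lp (fun _ : ↥(Set.Icc (0:ℝ) 1) => ℝ) ⊤,
      Memℓp (fun t : ↥(Set.Icc (0:ℝ) 1) => T (stmt14ext f) t) ⊤ := by
    intro f
    apply memℓp_infty
    refine ⟨‖f‖ + 1, fun r hr => ?_⟩
    obtain ⟨⟨t, ht0, ht1⟩, rfl⟩ := hr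
    show ‖T (stmt14ext ⇑f) t‖ ≤ ‖f‖ + 1
    rcases eq_or_lt_of_le ht1 with h1 | h1
    · rw [h1, hT1, Real.norm_eq_abs, abs_one]
      have := norm_nonneg f
      linarith
    · obtain ⟨i, hi1, hi2⟩ := cover t ht0 h1
      rw [hT _ i t ⟨hi1, hi2⟩]
      have hσm : (t - x i.castSucc) / (x i.succ - x i.castSucc) ∈ Set.Icc (0:ℝ) 1 :=
        Ico_subset_Icc_self (hphi i t hi1 hi2)
      rw [stmt14ext_eq (⇑f) hσm, Real.norm_eq_abs]
      have h2 : |f ⟨_, hσm⟩| ≤ ‖f‖ := by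
        rw [← Real.norm_eq_abs]
        exact lp.norm_apply_le_norm ENNReal.top_ne_zero f _
      have h3 : |F (x i.castSucc)| ≤ 1 := by
        have := isDF_mem hF (hx01 i.castSucc)
        rw [abs_le]; exact ⟨by linarith [this.1], this.2⟩
      have h4 := abs_add_le ((F (x i.succ) - F (x i.castSucc)) * f ⟨_, hσm⟩) (F (x i.castSucc))
      rw [abs_mul, abs_of_nonneg (hp0 i)] at h4
      have h5 : (F (x i.succ) - F (x i.castSucc)) * |f ⟨_, hσm⟩| ≤ 1 * ‖f‖ :=
        mul_le_mul (hp1 i) h2 (abs_nonneg _) zero_le_one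
      rw [one_mul] at h5
      linarith
  set Φ : lp (fun _ : ↥(Set.Icc (0:ℝ) 1) => ℝ) ⊤ → lp (fun _ : ↥(Set.Icc (0:ℝ) 1) => ℝ) ⊤ :=
    fun f => ⟨fun t => T (stmt14ext f) t, hmem f⟩ with hΦdef
  have hΦapp : ∀ (f : lp (fun _ : ↥(Set.Icc (0:ℝ) 1) => ℝ) ⊤) (t : ↥(Set.Icc (0:ℝ) 1)),
      (Φ f) t = T (stmt14ext f) t := fun f t => rfl
  -- pointwise bounds from the lp norm
  have happle : ∀ (f g : lp (fun _ : ↥(Set.Icc (0:ℝ) 1) => ℝ) ⊤) (t : ↥(Set.Icc (0:ℝ) 1)),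
      |f t - g t| ≤ dist f g := by
    intro f g t
    rw [dist_eq_norm, ← Real.norm_eq_abs]
    have := lp.norm_apply_le_norm (E := fun _ : ↥(Set.Icc (0:ℝ) 1) => ℝ)
      ENNReal.top_ne_zero (f - g) t
    simpa [lp.coeFn_sub] using this
  -- Lipschitz estimate for Φ
  have hlip : ∀ f g : lp (fun _ : ↥(Set.Icc (0:ℝ) 1) => ℝ) ⊤,
      dist (Φ f) (Φ g) ≤ c * dist f g := by
    intro f g
    rw [dist_eq_norm]
    refine lp.norm_le_of_forall_le (mul_nonneg hc0 dist_nonneg) (fun t => ?_)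
    have happ : (Φ f - Φ g) t = T (stmt14ext f) t - T (stmt14ext g) t := by
      simp [lp.coeFn_sub, hΦapp]
    rw [happ, Real.norm_eq_abs]
    obtain ⟨t, ht0, ht1⟩ := t
    rcases eq_or_lt_of_le ht1 with h1 | h1
    · show |T (stmt14ext ⇑f) t - T (stmt14ext ⇑g) t| ≤ _
      rw [h1, hT1, hT1, sub_self, abs_zero]
      exact mul_nonneg hc0 dist_nonneg
    · show |T (stmt14ext ⇑f) t - T (stmt14ext ⇑g) t| ≤ _
      obtain ⟨i, hi1, hi2⟩ := cover t ht0 h1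
      rw [hT _ i t ⟨hi1, hi2⟩, hT _ i t ⟨hi1, hi2⟩]
      have hσm : (t - x i.castSucc) / (x i.succ - x i.castSucc) ∈ Set.Icc (0:ℝ) 1 :=
        Ico_subset_Icc_self (hphi i t hi1 hi2)
      rw [stmt14ext_eq (⇑f) hσm, stmt14ext_eq (⇑g) hσm]
      have heq : (F (x i.succ) - F (x i.castSucc)) * f ⟨_, hσm⟩ + F (x i.castSucc) -
          ((F (x i.succ) - F (x i.castSucc)) * g ⟨_, hσm⟩ + F (x i.castSucc)) =
          (F (x i.succ) - F (x i.castSucc)) * (f ⟨_, hσm⟩ - g ⟨_, hσm⟩) := by ring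
      rw [heq, abs_mul, abs_of_nonneg (hp0 i)]
      calc (F (x i.succ) - F (x i.castSucc)) * |f ⟨_, hσm⟩ - g ⟨_, hσm⟩|
          ≤ (F (x i.succ) - F (x i.castSucc)) * dist f g :=
            mul_le_mul_of_nonneg_left (happle f g _) (hp0 i)
        _ ≤ c * dist f g := mul_le_mul_of_nonneg_right (hpc i) dist_nonneg
  -- the invariant set of distribution functions
  set D : Set (lp (fun _ : ↥(Set.Icc (0:ℝ) 1) => ℝ) ⊤) :=
    {f | IsDF (stmt14ext f)} with hDdef
  have hmaps : Set.MapsTo Φ D D := by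
    intro f hf
    show IsDF (stmt14ext (Φ f))
    refine isDF_congr (hTDF (stmt14ext f) hf) (fun t ht => ?_)
    rw [stmt14ext_eq (⇑(Φ f)) ht]
  -- D is closed
  have hDclosed : IsClosed D := by
    refine IsSeqClosed.isClosed ?_
    intro f f₀ hfD hft
    have hb : ∀ (k : ℕ) (t : ℝ) (ht : t ∈ Set.Icc (0:ℝ) 1),
        |stmt14ext (f k) t - stmt14ext f₀ t| ≤ dist (f k) f₀ := by
      intro k t ht
      rw [stmt14ext_eq _ ht, stmt14ext_eq _ ht]
      exact happle (f k) f₀ ⟨t, ht⟩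
    have hpt : ∀ t ∈ Set.Icc (0:ℝ) 1,
        Tendsto (fun k => stmt14ext (f k) t) atTop (𝓝 (stmt14ext f₀ t)) := by
      intro t ht
      rw [tendsto_iff_dist_tendsto_zero]
      refine squeeze_zero (fun k => dist_nonneg) (fun k => ?_)
        (tendsto_iff_dist_tendsto_zero.1 hft)
      rw [Real.dist_eq]
      exact hb k t ht
    show IsDF (stmt14ext f₀)
    refine ⟨?_, ?_, ?_, ?_⟩
    · intro s hs t ht hst
      exact le_of_tendsto_of_tendsto' (hpt s hs) (hpt t ht) (fun k => (hfD k).1 hs ht hst)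
    · intro a₀ ha₀
      have ha₀' : a₀ ∈ Set.Icc (0:ℝ) 1 := ⟨ha₀.1, ha₀.2.le⟩
      rw [ContinuousWithinAt, Metric.tendsto_nhdsWithin_nhds]
      intro ε hε
      obtain ⟨N, hN⟩ := (Metric.tendsto_atTop.1 hft) (ε/3) (by linarith)
      have hNd : dist (f N) f₀ < ε/3 := hN N le_rfl
      have hcwa := (hfD N).2.1 a₀ ha₀
      rw [ContinuousWithinAt, Metric.tendsto_nhdsWithin_nhds] at hcwa
      obtain ⟨δ, hδ0, hδ⟩ := hcwa (ε/3) (by linarith)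
      refine ⟨δ, hδ0, fun {t} ht hdist => ?_⟩
      have ht' : t ∈ Set.Icc (0:ℝ) 1 := ⟨le_trans ha₀.1 ht.1, ht.2⟩
      have h1 := lt_of_le_of_lt (hb N t ht') hNd
      have h2 := hδ ht hdist
      have h3 := lt_of_le_of_lt (hb N a₀ ha₀') hNd
      rw [Real.dist_eq] at h2 ⊢
      have t1 := abs_sub_le (stmt14ext f₀ t) (stmt14ext (f N) t) (stmt14ext f₀ a₀)
      have t2 := abs_sub_le (stmt14ext (f N) t) (stmt14ext (f N) a₀) (stmt14ext f₀ a₀)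
      have t3 : |stmt14ext f₀ t - stmt14ext (f N) t| =
          |stmt14ext (f N) t - stmt14ext f₀ t| := abs_sub_comm _ _
      linarith
    · have h0 : (0:ℝ) ∈ Set.Icc (0:ℝ) 1 := by norm_num
      have heq : (fun k => stmt14ext (f k) 0) = fun _ => (0:ℝ) :=
        funext fun k => (hfD k).2.2.1
      have := hpt 0 h0
      rw [heq] at this
      exact (tendsto_nhds_unique this tendsto_const_nhds)
    · have h1 : (1:ℝ) ∈ Set.Icc (0:ℝ) 1 := by norm_num
      have heq : (fun k => stmt14ext (f k) 1) = fun _ => (1:ℝ) :=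
        funext fun k => (hfD k).2.2.2
      have := hpt 1 h1
      rw [heq] at this
      exact (tendsto_nhds_unique this tendsto_const_nhds)
  -- the starting point: F itself
  have hFmem : Memℓp (fun t : ↥(Set.Icc (0:ℝ) 1) => F t) ⊤ := by
    apply memℓp_infty
    refine ⟨1, fun r hr => ?_⟩
    obtain ⟨t, rfl⟩ := hr
    show ‖F ↑t‖ ≤ 1
    rw [Real.norm_eq_abs, abs_le]
    have := isDF_mem hF t.2
    exact ⟨by linarith [this.1], this.2⟩
  have hf₀D : (⟨fun t : ↥(Set.Icc (0:ℝ) 1) => F t, hFmem⟩ :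
      lp (fun _ : ↥(Set.Icc (0:ℝ) 1) => ℝ) ⊤) ∈ D := by
    show IsDF (stmt14ext _)
    refine isDF_congr hF (fun t ht => ?_)
    rw [stmt14ext_eq _ ht]
  -- contraction
  have hcontr : ContractingWith ⟨c, hc0⟩ (hmaps.restrict Φ D D) := by
    constructor
    · show (⟨c, hc0⟩ : NNReal) < 1
      exact hc1
    · refine LipschitzWith.of_dist_le_mul (fun a b => ?_)
      exact hlip a.1 b.1
  obtain ⟨y, hyD, hyfix, -, -⟩ := ContractingWith.exists_fixedPoint'
    hDclosed.isComplete hmaps hcontr hf₀D (edist_ne_top _ _)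
  have hyDF : IsDF (stmt14ext ⇑y) := hyD
  have hfix : ∀ t ∈ Set.Icc (0:ℝ) 1, T (stmt14ext ⇑y) t = stmt14ext ⇑y t := by
    intro t ht
    have h1 : Φ y = y := hyfix
    calc T (stmt14ext ⇑y) t = (Φ y) ⟨t, ht⟩ := rfl
      _ = y ⟨t, ht⟩ := by rw [h1]
      _ = stmt14ext ⇑y t := (stmt14ext_eq _ ht).symm
  refine ⟨stmt14ext ⇑y, hyDF, hfix, ?_, ?_⟩
  · -- interpolation at the nodes
    intro i
    by_cases hil : i = Fin.last (n+1)
    · rw [hil, hx1, hyDF.2.2.2, hF.2.2.2]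
    · obtain ⟨j, rfl⟩ := Fin.exists_castSucc_eq.2 hil
      have hmemj : x j.castSucc ∈ Set.Ico (x j.castSucc) (x j.succ) := ⟨le_rfl, hab j⟩
      rw [← hfix _ (hx01 j.castSucc), hT _ j _ hmemj]
      simp [sub_self, zero_div, hyDF.2.2.1]
  · -- uniqueness
    intro G hG hGfix t ht
    have h1 : dsup (T G) (T (stmt14ext ⇑y)) = dsup G (stmt14ext ⇑y) :=
      iSup_congr fun s => by rw [hGfix s s.2, hfix s s.2]
    have h2 := part1 G _ hG hyDF
    rw [h1] at h2
    have h3 := hd0 G _ hG hyDF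
    have h4 : dsup G (stmt14ext ⇑y) ≤ 0 := by nlinarith
    have h5 := hdle G _ hG hyDF ⟨t, ht⟩
    have h6 : |G t - stmt14ext ⇑y t| ≤ 0 := le_trans h5 h4
    have h7 := abs_nonpos_iff.1 h6
    linarith [abs_nonneg (G t - stmt14ext ⇑y t), sub_eq_zero.1 h7]
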